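/- With the resonator coefficients f = f_M as defined, for every ε > 0 one has Σ_{nu ≤ M} f(u) f(nu) (log n)²/√n ≪_ε Q₁ (log M)^{1+ε} as M → ∞, where Q₁ = Π_p (1 + f(p)² + f(p)/√p). -/

import Mathlib

open Filter Finset
open scoped Classical

/-- `L = √(log M · log log M)` for the resonator parameter `M`. -/
noncomputable def resL (M : ℕ) : ℝ := Real.sqrt (Real.log M * Real.log (Real.log M))

/-- The value of the resonator coefficients at a prime `p`:
`f(p) = L/(√p log p)` if `L² ≤ p ≤ exp((log L)²)`, and `f(p) = 0` otherwise. -/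
noncomputable def resFp (M p : ℕ) : ℝ :=
  if resL M ^ 2 ≤ (p : ℝ) ∧ (p : ℝ) ≤ Real.exp (Real.log (resL M) ^ 2) then
    resL M / (Real.sqrt p * Real.log p)
  else 0

/-- The resonator coefficients `f = f_M`: the multiplicative function supported on squarefree
integers determined by its values `resFp` at primes. -/
noncomputable def resF (M n : ℕ) : ℝ :=
  if Squarefree n then ∏ p ∈ n.primeFactors, resFp M p else 0

/-- `Q₁ = Π_p (1 + f(p)² + f(p)/√p)`. -/
noncomputable def resQ1 (M : ℕ) : ℝ :=
  ∏ᶠ p ∈ {p : ℕ | p.Prime}, (1 + resFp M p ^ 2 + resFp M p / Real.sqrt p)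

/-- `Q₂ = Π_p (1 + f(p)²)`. -/
noncomputable def resQ2 (M : ℕ) : ℝ :=
  ∏ᶠ p ∈ {p : ℕ | p.Prime}, (1 + resFp M p ^ 2)

/-- The multiplicative function `g` supported on squarefree integers with `g(p) = 1 + f(p)²`. -/
noncomputable def resG (M n : ℕ) : ℝ :=
  if Squarefree n then ∏ p ∈ n.primeFactors, (1 + resFp M p ^ 2) else 0

lemma Zid (P : Finset ℕ) (c : ℕ → ℝ) :
    ∑ S ∈ P.powerset, ∏ p ∈ S, c p = ∏ p ∈ P, (1 + c p) := by
  rw [show (fun p => 1 + c p) = fun p => c p + 1 by funext p; ring]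
  rw [Finset.prod_add]
  exact (Finset.sum_congr rfl fun S hS => by simp).symm

lemma G1bound (P : Finset ℕ) (c l : ℕ → ℝ) (hc : ∀ p ∈ P, 0 ≤ c p) (hl : ∀ p ∈ P, 0 ≤ l p) :
    ∑ S ∈ P.powerset, (∏ p ∈ S, c p) * (∑ p ∈ S, l p)
      ≤ (∏ p ∈ P, (1 + c p)) * (∑ p ∈ P, c p * l p) := by
  classical
  induction P using Finset.induction_on with
  | empty => simp
  | insert _ _ ha =>
    rename_i a s ih
    have hca : 0 ≤ c a := hc a (mem_insert_self a s)
    have hla : 0 ≤ l a := hl a (mem_insert_self a s)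
    have hc' : ∀ p ∈ s, 0 ≤ c p := fun p hp => hc p (mem_insert_of_mem hp)
    have hl' : ∀ p ∈ s, 0 ≤ l p := fun p hp => hl p (mem_insert_of_mem hp)
    have IH := ih hc' hl'
    have hZ : (0:ℝ) ≤ ∏ p ∈ s, (1 + c p) :=
      Finset.prod_nonneg fun p hp => by linarith [hc' p hp]
    have hT : (0:ℝ) ≤ ∑ p ∈ s, c p * l p :=
      Finset.sum_nonneg fun p hp => mul_nonneg (hc' p hp) (hl' p hp)
    rw [Finset.sum_powerset_insert ha, Finset.prod_insert ha, Finset.sum_insert ha]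
    have key : ∀ S ∈ s.powerset,
        (∏ p ∈ insert a S, c p) * (∑ p ∈ insert a S, l p)
          = c a * ((∏ p ∈ S, c p) * (∑ p ∈ S, l p)) + c a * l a * ∏ p ∈ S, c p := by
      intro S hS
      have haS : a ∉ S := fun h => ha (Finset.mem_powerset.mp hS h)
      rw [Finset.prod_insert haS, Finset.sum_insert haS]; ring
    rw [Finset.sum_congr rfl key, Finset.sum_add_distrib, ← Finset.mul_sum, ← Finset.mul_sum,
      Zid]
    nlinarith [mul_le_mul_of_nonneg_left IH (by linarith : (0:ℝ) ≤ 1 + c a),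
      mul_nonneg (mul_nonneg hca hla) (mul_nonneg hca hZ)]

lemma G2bound (P : Finset ℕ) (c l : ℕ → ℝ) (hc : ∀ p ∈ P, 0 ≤ c p) (hl : ∀ p ∈ P, 0 ≤ l p) :
    ∑ S ∈ P.powerset, (∏ p ∈ S, c p) * (∑ p ∈ S, l p) ^ 2
      ≤ (∏ p ∈ P, (1 + c p)) *
        ((∑ p ∈ P, c p * l p ^ 2) + (∑ p ∈ P, c p * l p) ^ 2) := by
  classical
  induction P using Finset.induction_on with
  | empty => simp
  | insert _ _ ha =>
    rename_i a s ih
    have hca : 0 ≤ c a := hc a (mem_insert_self a s)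
    have hla : 0 ≤ l a := hl a (mem_insert_self a s)
    have hc' : ∀ p ∈ s, 0 ≤ c p := fun p hp => hc p (mem_insert_of_mem hp)
    have hl' : ∀ p ∈ s, 0 ≤ l p := fun p hp => hl p (mem_insert_of_mem hp)
    have IH := ih hc' hl'
    have IH1 := G1bound s c l hc' hl'
    have hZ : (0:ℝ) ≤ ∏ p ∈ s, (1 + c p) :=
      Finset.prod_nonneg fun p hp => by linarith [hc' p hp]
    have hT : (0:ℝ) ≤ ∑ p ∈ s, c p * l p :=
      Finset.sum_nonneg fun p hp => mul_nonneg (hc' p hp) (hl' p hp)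
    have hD : (0:ℝ) ≤ ∑ p ∈ s, c p * l p ^ 2 :=
      Finset.sum_nonneg fun p hp => mul_nonneg (hc' p hp) (sq_nonneg _)
    rw [Finset.sum_powerset_insert ha, Finset.prod_insert ha, Finset.sum_insert ha,
      Finset.sum_insert ha]
    have key : ∀ S ∈ s.powerset,
        (∏ p ∈ insert a S, c p) * (∑ p ∈ insert a S, l p) ^ 2
          = c a * ((∏ p ∈ S, c p) * (∑ p ∈ S, l p) ^ 2)
            + 2 * (c a * l a) * ((∏ p ∈ S, c p) * (∑ p ∈ S, l p))
            + c a * l a ^ 2 * ∏ p ∈ S, c p := by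
      intro S hS
      have haS : a ∉ S := fun h => ha (Finset.mem_powerset.mp hS h)
      rw [Finset.prod_insert haS, Finset.sum_insert haS]; ring
    rw [Finset.sum_congr rfl key]
    rw [Finset.sum_add_distrib, Finset.sum_add_distrib, ← Finset.mul_sum, ← Finset.mul_sum,
      ← Finset.mul_sum, Zid]
    nlinarith [mul_le_mul_of_nonneg_left IH hca,
      mul_le_mul_of_nonneg_left IH1 (mul_nonneg (mul_nonneg (by norm_num : (0:ℝ) ≤ 2) hca) hla),
      mul_nonneg (mul_nonneg hZ hca) (mul_nonneg hca (sq_nonneg (l a))),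
      mul_nonneg (mul_nonneg hZ hca) (mul_nonneg (mul_nonneg hca hla) hT),
      mul_nonneg (mul_nonneg hZ hca) (mul_nonneg (mul_nonneg hca hla) (mul_nonneg hca hla))]

noncomputable def resX (M : ℕ) : ℝ := Real.exp (Real.log (resL M) ^ 2)
noncomputable def resK (M : ℕ) : ℕ := ⌈resX M⌉₊ + 1
noncomputable def resP (M : ℕ) : Finset ℕ := (Finset.range (resK M)).filter Nat.Prime

lemma resL_nonneg (M : ℕ) : 0 ≤ resL M := Real.sqrt_nonneg _

lemma resFp_nonneg (M p : ℕ) : 0 ≤ resFp M p := by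
  unfold resFp
  split
  · exact div_nonneg (resL_nonneg M) (mul_nonneg (Real.sqrt_nonneg _)
      (by rcases Nat.eq_zero_or_pos p with h | h
          · simp [h]
          · exact Real.log_natCast_nonneg p))
  · exact le_refl 0

lemma resF_nonneg (M n : ℕ) : 0 ≤ resF M n := by
  unfold resF; split
  · exact Finset.prod_nonneg fun p _ => resFp_nonneg M p
  · exact le_refl 0

lemma resFp_le_X {M p : ℕ} (h : resFp M p ≠ 0) : (p : ℝ) ≤ resX M := by
  unfold resFp at h
  by_cases hc : resL M ^ 2 ≤ (p : ℝ) ∧ (p : ℝ) ≤ Real.exp (Real.log (resL M) ^ 2)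
  · exact hc.2
  · simp [hc] at h

lemma mem_resP {M p : ℕ} (hp : p.Prime) (h : resFp M p ≠ 0) : p ∈ resP M := by
  refine Finset.mem_filter.mpr ⟨Finset.mem_range.mpr ?_, hp⟩
  have h1 : (p : ℝ) ≤ resX M := resFp_le_X h
  have h2 : p ≤ ⌈resX M⌉₊ := by
    have := h1.trans (Nat.le_ceil (resX M))
    exact_mod_cast this
  unfold resK; omega

lemma resF_support {M n : ℕ} (h : resF M n ≠ 0) :
    Squarefree n ∧ n.primeFactors ⊆ resP M := by
  unfold resF at h
  by_cases hs : Squarefree n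
  · refine ⟨hs, fun p hp => ?_⟩
    rw [if_pos hs] at h
    have hne : resFp M p ≠ 0 := fun h0 => h (Finset.prod_eq_zero hp h0)
    exact mem_resP (Nat.prime_of_mem_primeFactors hp) hne
  · rw [if_neg hs] at h; exact absurd rfl h

lemma resF_mul {M n u : ℕ} (h : Squarefree (n * u)) :
    resF M (n * u) = resF M n * resF M u := by
  obtain ⟨hco, hn, hu⟩ := Nat.squarefree_mul_iff.mp h
  unfold resF
  rw [if_pos h, if_pos hn, if_pos hu,
    Nat.primeFactors_mul hn.ne_zero hu.ne_zero,
    Finset.prod_union (Nat.Coprime.disjoint_primeFactors hco)]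

/-- Injection lemma. -/
lemma sum_le_powerset_sum {A : Finset ℕ} {w : ℕ → ℝ} {Q : Finset ℕ} {W : Finset ℕ → ℝ}
    (hw : ∀ u ∈ A, 0 ≤ w u)
    (h0 : ∀ u ∈ A, w u ≠ 0 → Squarefree u ∧ u.primeFactors ⊆ Q ∧ w u ≤ W u.primeFactors)
    (hW : ∀ S ∈ Q.powerset, 0 ≤ W S) :
    ∑ u ∈ A, w u ≤ ∑ S ∈ Q.powerset, W S := by
  classical
  set A' := A.filter (fun u => w u ≠ 0) with hA'
  have h1 : ∑ u ∈ A, w u = ∑ u ∈ A', w u := (Finset.sum_filter_ne_zero A).symm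
  rw [h1]
  have h2 : ∑ u ∈ A', w u ≤ ∑ u ∈ A', W u.primeFactors := by
    refine Finset.sum_le_sum fun u hu => ?_
    obtain ⟨huA, hwu⟩ := Finset.mem_filter.mp hu
    exact (h0 u huA hwu).2.2
  refine h2.trans ?_
  have hinj : ∀ x ∈ A', ∀ y ∈ A', x.primeFactors = y.primeFactors → x = y := by
    intro x hx y hy hxy
    obtain ⟨hxA, hwx⟩ := Finset.mem_filter.mp hx
    obtain ⟨hyA, hwy⟩ := Finset.mem_filter.mp hy
    have ex := Nat.prod_primeFactors_of_squarefree (h0 x hxA hwx).1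
    have ey := Nat.prod_primeFactors_of_squarefree (h0 y hyA hwy).1
    rw [← ex, ← ey, hxy]
  have h3 : ∑ u ∈ A', W u.primeFactors = ∑ S ∈ A'.image Nat.primeFactors, W S :=
    (Finset.sum_image hinj).symm
  rw [h3]
  refine Finset.sum_le_sum_of_subset_of_nonneg ?_ (fun S hS _ => hW S hS)
  intro S hS
  obtain ⟨u, hu, rfl⟩ := Finset.mem_image.mp hS
  obtain ⟨huA, hwu⟩ := Finset.mem_filter.mp hu
  exact Finset.mem_powerset.mpr (h0 u huA hwu).2.1

lemma sqrt_prod (S : Finset ℕ) (g : ℕ → ℝ) (hg : ∀ p ∈ S, 0 ≤ g p) :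
    Real.sqrt (∏ p ∈ S, g p) = ∏ p ∈ S, Real.sqrt (g p) := by
  classical
  induction S using Finset.induction_on with
  | empty => simp
  | insert _ _ ha =>
    rename_i a s ih
    rw [Finset.prod_insert ha, Finset.prod_insert ha,
      Real.sqrt_mul (hg a (mem_insert_self a s)),
      ih (fun p hp => hg p (mem_insert_of_mem hp))]

noncomputable def resa (M p : ℕ) : ℝ := resFp M p / Real.sqrt p
noncomputable def resb (M p : ℕ) : ℝ := 1 + resFp M p ^ 2
noncomputable def resc (M p : ℕ) : ℝ := resa M p / resb M p

lemma resb_pos (M p : ℕ) : 0 < resb M p := by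
  have := sq_nonneg (resFp M p); unfold resb; linarith

lemma resa_nonneg (M p : ℕ) : 0 ≤ resa M p :=
  div_nonneg (resFp_nonneg M p) (Real.sqrt_nonneg _)

lemma resc_nonneg (M p : ℕ) : 0 ≤ resc M p :=
  div_nonneg (resa_nonneg M p) (resb_pos M p).le

lemma inner_bound (M n : ℕ) (A : Finset ℕ) :
    ∑ u ∈ A, resF M u * resF M (n * u)
      ≤ resF M n * ∏ p ∈ resP M \ n.primeFactors, resb M p := by
  classical
  set Q := resP M \ n.primeFactors with hQ
  set w : ℕ → ℝ := fun u =>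
    if Squarefree u ∧ u.primeFactors ⊆ Q then resF M u ^ 2 else 0 with hw
  have hw_nonneg : ∀ u, 0 ≤ w u := by
    intro u; rw [hw]; dsimp only; split
    · exact sq_nonneg _
    · exact le_refl 0
  have step1 : ∀ u, resF M u * resF M (n * u) ≤ resF M n * w u := by
    intro u
    by_cases hsf : Squarefree (n * u)
    · obtain ⟨hco, hn, hu⟩ := Nat.squarefree_mul_iff.mp hsf
      rw [resF_mul hsf]
      by_cases hfu : resF M u = 0
      · rw [hfu]; simp [mul_nonneg (resF_nonneg M n) (hw_nonneg u)]
      · have hsub : u.primeFactors ⊆ Q := by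
          intro p hp
          rw [hQ, Finset.mem_sdiff]
          refine ⟨(resF_support hfu).2 hp, ?_⟩
          exact fun hpn => (Finset.disjoint_left.mp
            (Nat.Coprime.disjoint_primeFactors hco) hpn) hp
        have : w u = resF M u ^ 2 := by rw [hw]; exact if_pos ⟨hu, hsub⟩
        rw [this]; ring_nf; exact le_refl _
    · have : resF M (n * u) = 0 := by unfold resF; rw [if_neg hsf]
      rw [this, mul_zero]
      exact mul_nonneg (resF_nonneg M n) (hw_nonneg u)
  calc ∑ u ∈ A, resF M u * resF M (n * u)
      ≤ ∑ u ∈ A, resF M n * w u := Finset.sum_le_sum fun u _ => step1 u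
    _ = resF M n * ∑ u ∈ A, w u := by rw [Finset.mul_sum]
    _ ≤ resF M n * ∏ p ∈ Q, resb M p := by
        refine mul_le_mul_of_nonneg_left ?_ (resF_nonneg M n)
        have key : ∑ u ∈ A, w u ≤ ∑ S ∈ Q.powerset, ∏ p ∈ S, resFp M p ^ 2 := by
          refine sum_le_powerset_sum (fun u _ => hw_nonneg u) ?_ ?_
          · intro u _ hwu
            rw [hw] at hwu; dsimp only at hwu
            by_cases hc : Squarefree u ∧ u.primeFactors ⊆ Q
            · refine ⟨hc.1, hc.2, ?_⟩
              rw [hw]; dsimp only; rw [if_pos hc]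
              unfold resF; rw [if_pos hc.1, ← Finset.prod_pow]
            · rw [if_neg hc] at hwu; exact absurd rfl hwu
          · intro S _
            exact Finset.prod_nonneg fun p _ => sq_nonneg _
        refine key.trans ?_
        rw [Zid Q (fun p => resFp M p ^ 2)]
        unfold resb
        exact le_refl _

lemma main_bound (M : ℕ) :
    ∑ n ∈ Finset.Icc 1 M, ∑ u ∈ Finset.Icc 1 (M / n),
        resF M u * resF M (n * u) * Real.log n ^ 2 / Real.sqrt n
      ≤ (∏ p ∈ resP M, (resb M p + resa M p)) *
        ((∑ p ∈ resP M, resc M p * Real.log p ^ 2)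
          + (∑ p ∈ resP M, resc M p * Real.log p) ^ 2) := by
  classical
  set P := resP M with hP
  set W : Finset ℕ → ℝ := fun S =>
    (∏ p ∈ S, resa M p) * (∏ p ∈ P \ S, resb M p) * (∑ p ∈ S, Real.log p) ^ 2 with hWdef
  have hbnn : ∀ p, (0:ℝ) ≤ resb M p := fun p => (resb_pos M p).le
  have step2 : ∑ n ∈ Finset.Icc 1 M, ∑ u ∈ Finset.Icc 1 (M / n),
        resF M u * resF M (n * u) * Real.log n ^ 2 / Real.sqrt n
      ≤ ∑ n ∈ Finset.Icc 1 M,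
          resF M n * (∏ p ∈ P \ n.primeFactors, resb M p)
            * Real.log n ^ 2 / Real.sqrt n := by
    refine Finset.sum_le_sum fun n _ => ?_
    have : ∑ u ∈ Finset.Icc 1 (M / n),
        resF M u * resF M (n * u) * Real.log n ^ 2 / Real.sqrt n
        = (∑ u ∈ Finset.Icc 1 (M / n), resF M u * resF M (n * u))
            * Real.log n ^ 2 / Real.sqrt n := by
      simp only [div_eq_mul_inv]
      rw [← Finset.sum_mul, ← Finset.sum_mul]
    rw [this]
    rw [div_eq_mul_inv, div_eq_mul_inv]
    refine mul_le_mul_of_nonneg_right ?_ (inv_nonneg.mpr (Real.sqrt_nonneg _))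
    exact mul_le_mul_of_nonneg_right (inner_bound M n _) (sq_nonneg _)
  refine step2.trans ?_
  have step3 : ∑ n ∈ Finset.Icc 1 M,
        resF M n * (∏ p ∈ P \ n.primeFactors, resb M p) * Real.log n ^ 2 / Real.sqrt n
      ≤ ∑ S ∈ P.powerset, W S := by
    refine sum_le_powerset_sum ?_ ?_ ?_
    · intro n _
      exact div_nonneg (mul_nonneg (mul_nonneg (resF_nonneg M n)
        (Finset.prod_nonneg fun p _ => hbnn p)) (sq_nonneg _)) (Real.sqrt_nonneg _)
    · intro n _ hwn
      have hfn : resF M n ≠ 0 := by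
        intro h0; apply hwn; rw [h0]; ring
      obtain ⟨hsf, hsub⟩ := resF_support hfn
      refine ⟨hsf, hsub, ?_⟩
      have e0 : (n:ℝ) = ∏ p ∈ n.primeFactors, (p:ℝ) := by
        rw [← Nat.cast_prod, Nat.prod_primeFactors_of_squarefree hsf]
      have e1 : resF M n = ∏ p ∈ n.primeFactors, resFp M p := by
        unfold resF; rw [if_pos hsf]
      have e2 : Real.sqrt n = ∏ p ∈ n.primeFactors, Real.sqrt p := by
        rw [e0, sqrt_prod _ _ (fun p _ => by positivity)]
      have e3 : Real.log n = ∑ p ∈ n.primeFactors, Real.log p := by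
        rw [e0, Real.log_prod]
        intro p hp
        exact_mod_cast (Nat.prime_of_mem_primeFactors hp).pos.ne'
      have e4 : ∏ p ∈ n.primeFactors, resa M p
          = (∏ p ∈ n.primeFactors, resFp M p) / ∏ p ∈ n.primeFactors, Real.sqrt p := by
        unfold resa; rw [Finset.prod_div_distrib]
      rw [hWdef]; dsimp only
      rw [e1, e2, e3, e4]
      apply le_of_eq; ring
    · intro S hS
      rw [hWdef]; dsimp only
      exact mul_nonneg (mul_nonneg (Finset.prod_nonneg fun p _ => resa_nonneg M p)
        (Finset.prod_nonneg fun p _ => hbnn p)) (sq_nonneg _)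
  refine step3.trans ?_
  have step4 : ∑ S ∈ P.powerset, W S
      = (∏ p ∈ P, resb M p) *
          ∑ S ∈ P.powerset, (∏ p ∈ S, resc M p) * (∑ p ∈ S, Real.log p) ^ 2 := by
    rw [Finset.mul_sum]
    refine Finset.sum_congr rfl fun S hS => ?_
    have hSP : S ⊆ P := Finset.mem_powerset.mp hS
    have hsd : (∏ p ∈ P \ S, resb M p) * ∏ p ∈ S, resb M p = ∏ p ∈ P, resb M p :=
      Finset.prod_sdiff hSP
    have hcb : ∏ p ∈ S, resa M p = (∏ p ∈ S, resc M p) * ∏ p ∈ S, resb M p := by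
      rw [← Finset.prod_mul_distrib]
      refine Finset.prod_congr rfl fun p _ => ?_
      unfold resc
      rw [div_mul_cancel₀ _ (resb_pos M p).ne']
    rw [hWdef]; dsimp only
    rw [hcb, ← hsd]; ring
  rw [step4]
  have step5 : ∑ S ∈ P.powerset, (∏ p ∈ S, resc M p) * (∑ p ∈ S, Real.log p) ^ 2
      ≤ (∏ p ∈ P, (1 + resc M p)) *
          ((∑ p ∈ P, resc M p * Real.log p ^ 2) + (∑ p ∈ P, resc M p * Real.log p) ^ 2) :=
    G2bound P _ _ (fun p _ => resc_nonneg M p) (fun p _ => Real.log_natCast_nonneg p)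
  have hfinal : (∏ p ∈ P, resb M p) * ((∏ p ∈ P, (1 + resc M p)) *
          ((∑ p ∈ P, resc M p * Real.log p ^ 2) + (∑ p ∈ P, resc M p * Real.log p) ^ 2))
      = (∏ p ∈ P, (resb M p + resa M p)) *
          ((∑ p ∈ P, resc M p * Real.log p ^ 2) + (∑ p ∈ P, resc M p * Real.log p) ^ 2) := by
    rw [← mul_assoc, ← Finset.prod_mul_distrib]
    congr 1
    refine Finset.prod_congr rfl fun p _ => ?_
    unfold resc
    rw [mul_add, mul_one, mul_div_cancel₀ _ (resb_pos M p).ne']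
  calc (∏ p ∈ P, resb M p) *
        ∑ S ∈ P.powerset, (∏ p ∈ S, resc M p) * (∑ p ∈ S, Real.log p) ^ 2
      ≤ (∏ p ∈ P, resb M p) * ((∏ p ∈ P, (1 + resc M p)) *
          ((∑ p ∈ P, resc M p * Real.log p ^ 2) + (∑ p ∈ P, resc M p * Real.log p) ^ 2)) :=
        mul_le_mul_of_nonneg_left step5 (Finset.prod_nonneg fun p _ => hbnn p)
    _ = _ := hfinal

lemma resFp_eq_zero_of_one_lt {M p : ℕ} (h : resX M < (p : ℝ)) : resFp M p = 0 := by
  unfold resFp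
  rw [if_neg]
  rintro ⟨-, h2⟩
  exact absurd h2 (not_le.mpr (lt_of_lt_of_le h (le_refl _)))

lemma resQ1_eq (M : ℕ) :
    resQ1 M = ∏ p ∈ resP M, (resb M p + resa M p) := by
  classical
  set g : ℕ → ℝ := fun p => 1 + resFp M p ^ 2 + resFp M p / Real.sqrt p with hg
  have hgone : ∀ p, resFp M p = 0 → g p = 1 := by
    intro p h; rw [hg]; dsimp only; rw [h]; simp
  have hfin : ({p : ℕ | p.Prime} ∩ Function.mulSupport g).Finite := by
    refine Set.Finite.subset (Finset.range (resK M)).finite_toSet ?_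
    rintro p ⟨hp, hsupp⟩
    have hne : resFp M p ≠ 0 := fun h => hsupp (hgone p h)
    exact Finset.mem_coe.mpr (Finset.mem_filter.mp (mem_resP hp hne)).1
  have h1 : resQ1 M = ∏ p ∈ hfin.toFinset, g p := finprod_mem_eq_prod g hfin
  rw [h1]
  have h2 : ∏ p ∈ hfin.toFinset, g p = ∏ p ∈ resP M, g p := by
    refine Finset.prod_subset ?_ ?_
    · intro p hp
      rw [Set.Finite.mem_toFinset] at hp
      obtain ⟨hprime, hsupp⟩ := hp
      exact mem_resP hprime (fun h => hsupp (hgone p h))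
    · intro p hp hnp
      by_contra hne
      apply hnp
      rw [Set.Finite.mem_toFinset]
      exact ⟨(Finset.mem_filter.mp hp).2, hne⟩
  rw [h2]
  refine Finset.prod_congr rfl fun p _ => ?_
  rw [hg]; unfold resb resa; dsimp only

lemma one_le_resQ1 (M : ℕ) : 1 ≤ resQ1 M := by
  rw [resQ1_eq]
  calc (1:ℝ) = ∏ _p ∈ resP M, 1 := by simp
    _ ≤ ∏ p ∈ resP M, (resb M p + resa M p) := by
        refine Finset.prod_le_prod (fun p _ => zero_le_one) (fun p _ => ?_)
        have h1 : (1:ℝ) ≤ resb M p := by unfold resb; nlinarith [sq_nonneg (resFp M p)]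
        linarith [resa_nonneg M p]

lemma resc_log_le (M p : ℕ) (hp : p ∈ resP M) :
    resc M p * Real.log p ≤ resL M / p := by
  have hprime : p.Prime := (Finset.mem_filter.mp hp).2
  have hp1 : (1:ℝ) < p := by exact_mod_cast hprime.one_lt
  have hlogp : 0 < Real.log p := Real.log_pos hp1
  have hsq : Real.sqrt p * Real.sqrt p = (p:ℝ) := Real.mul_self_sqrt (by positivity)
  have hsqpos : 0 < Real.sqrt p := Real.sqrt_pos.mpr (by positivity)
  have h1 : resc M p ≤ resa M p := by
    refine div_le_self (resa_nonneg M p) ?_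
    unfold resb; nlinarith [sq_nonneg (resFp M p)]
  have h2 : resc M p * Real.log p ≤ resa M p * Real.log p :=
    mul_le_mul_of_nonneg_right h1 hlogp.le
  refine h2.trans ?_
  unfold resa resFp
  split
  · rw [div_div]
    rw [div_mul_eq_mul_div, div_le_div_iff₀ (by positivity) (by positivity)]
    rw [show Real.sqrt p * Real.log p * Real.sqrt p
        = Real.sqrt p * Real.sqrt p * Real.log p from by ring, hsq]
    exact le_of_eq (by ring)
  · rw [zero_div, zero_mul]
    exact div_nonneg (resL_nonneg M) (Nat.cast_nonneg p)

lemma two_le_resK (M : ℕ) : 2 ≤ resK M := by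
  have : 1 ≤ ⌈resX M⌉₊ := Nat.one_le_ceil_iff.mpr (Real.exp_pos _)
  unfold resK; omega

lemma resT_le (M : ℕ) :
    ∑ p ∈ resP M, resc M p * Real.log p ≤ resL M * (1 + Real.log (resK M)) := by
  have hK := two_le_resK M
  calc ∑ p ∈ resP M, resc M p * Real.log p
      ≤ ∑ p ∈ resP M, resL M / p := Finset.sum_le_sum (fun p hp => resc_log_le M p hp)
    _ ≤ ∑ d ∈ Finset.Icc 1 (resK M - 1), resL M / d := by
        refine Finset.sum_le_sum_of_subset_of_nonneg ?_
          (fun d _ _ => div_nonneg (resL_nonneg M) (Nat.cast_nonneg d))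
        intro p hp
        obtain ⟨hrange, hprime⟩ := Finset.mem_filter.mp hp
        have h1 := Finset.mem_range.mp hrange
        have h2 := hprime.two_le
        rw [Finset.mem_Icc]; omega
    _ = resL M * ∑ d ∈ Finset.Icc 1 (resK M - 1), ((d:ℝ))⁻¹ := by
        rw [Finset.mul_sum]
        exact Finset.sum_congr rfl fun d _ => div_eq_mul_inv _ _
    _ = resL M * ((harmonic (resK M - 1) : ℚ) : ℝ) := by
        rw [harmonic_eq_sum_Icc]; push_cast; ring
    _ ≤ resL M * (1 + Real.log (resK M - 1 : ℕ)) :=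
        mul_le_mul_of_nonneg_left (harmonic_le_one_add_log _) (resL_nonneg M)
    _ ≤ resL M * (1 + Real.log (resK M)) := by
        refine mul_le_mul_of_nonneg_left ?_ (resL_nonneg M)
        have : Real.log ((resK M - 1 : ℕ) : ℝ) ≤ Real.log (resK M) := by
          refine Real.log_le_log (by exact_mod_cast Nat.sub_pos_of_lt (by omega)) ?_
          exact_mod_cast Nat.sub_le _ _
        linarith

lemma resD_le (M : ℕ) :
    ∑ p ∈ resP M, resc M p * Real.log p ^ 2
      ≤ (∑ p ∈ resP M, resc M p * Real.log p) * Real.log (resK M) := by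
  rw [Finset.sum_mul]
  refine Finset.sum_le_sum fun p hp => ?_
  obtain ⟨hrange, hprime⟩ := Finset.mem_filter.mp hp
  have hpK := Finset.mem_range.mp hrange
  have hlogp_nonneg : 0 ≤ Real.log p := Real.log_natCast_nonneg p
  have hle : Real.log p ≤ Real.log (resK M) := by
    refine Real.log_le_log (by exact_mod_cast hprime.pos) ?_
    exact_mod_cast hpK.le
  calc resc M p * Real.log p ^ 2 = resc M p * Real.log p * Real.log p := by ring
    _ ≤ resc M p * Real.log p * Real.log (resK M) :=
        mul_le_mul_of_nonneg_left hle (mul_nonneg (resc_nonneg M p) hlogp_nonneg)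

lemma logK_le (M : ℕ) (hlogL : 1 ≤ Real.log (resL M)) :
    Real.log (resK M) ≤ 2 * Real.log (resL M) ^ 2 := by
  have hXpos : 0 < resX M := Real.exp_pos _
  have hX2 : (2:ℝ) ≤ resX M := by
    have h1 : Real.exp 1 ≤ resX M := by
      unfold resX
      refine Real.exp_le_exp.mpr ?_
      nlinarith
    have h2 := Real.add_one_le_exp 1
    linarith
  have hKle : (resK M : ℝ) ≤ resX M ^ 2 := by
    have h1 : (resK M : ℝ) = (⌈resX M⌉₊ : ℝ) + 1 := by unfold resK; push_cast; ring
    have h2 : (⌈resX M⌉₊ : ℝ) < resX M + 1 := Nat.ceil_lt_add_one hXpos.le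
    nlinarith
  have h3 : Real.log (resK M) ≤ Real.log (resX M ^ 2) := by
    refine Real.log_le_log ?_ hKle
    exact_mod_cast Nat.lt_of_lt_of_le Nat.zero_lt_two (two_le_resK M)
  rw [Real.log_pow] at h3
  have h4 : Real.log (resX M) = Real.log (resL M) ^ 2 := Real.log_exp _
  rw [h4] at h3
  push_cast at h3
  linarith


/-- With the resonator coefficients `f = f_M` as defined, for every `ε > 0`
one has `Σ_{nu ≤ M} f(u) f(nu) (log n)²/√n ≪_ε Q₁ (log M)^{1+ε}` as `M → ∞`. -/
theorem resonator_logSq_weighted_sum (ε : ℝ) (hε : 0 < ε) :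
    (fun M : ℕ =>
        ∑ n ∈ Finset.Icc 1 M, ∑ u ∈ Finset.Icc 1 (M / n),
          resF M u * resF M (n * u) * Real.log n ^ 2 / Real.sqrt n)
      =O[atTop] fun M : ℕ => resQ1 M * Real.log M ^ ((1 : ℝ) + ε) := by
  rw [Asymptotics.isBigO_iff]
  refine ⟨1, ?_⟩
  have hlogN : Tendsto (fun M : ℕ => Real.log M) atTop atTop :=
    Real.tendsto_log_atTop.comp tendsto_natCast_atTop_atTop
  have hloglogN : Tendsto (fun M : ℕ => Real.log (Real.log M)) atTop atTop :=
    Real.tendsto_log_atTop.comp hlogN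
  have hlo := (isLittleO_log_rpow_atTop (show (0:ℝ) < ε/5 by positivity)).def
    (show (0:ℝ) < 1/3 by norm_num)
  have E4 : ∀ᶠ M : ℕ in atTop,
      ‖Real.log (Real.log M)‖ ≤ 1/3 * ‖(Real.log M) ^ (ε/5)‖ := hlogN.eventually hlo
  filter_upwards [hlogN.eventually_ge_atTop 9, hloglogN.eventually_ge_atTop 1, E4]
    with M hlogM hloglogM hE4
  have hlogM1 : (1:ℝ) ≤ Real.log M := by linarith
  have hlogMpos : (0:ℝ) < Real.log M := by linarith
  have hprod9 : (9:ℝ) ≤ Real.log M * Real.log (Real.log M) := by nlinarith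
  have hprodnn : (0:ℝ) ≤ Real.log M * Real.log (Real.log M) := by nlinarith
  have hL3 : (3:ℝ) ≤ resL M := by
    have := Real.sqrt_le_sqrt hprod9
    rwa [show (9:ℝ) = 3^2 by norm_num, Real.sqrt_sq (by norm_num : (0:ℝ) ≤ 3)] at this
  have hLpos : (0:ℝ) < resL M := by linarith
  have hL2 : resL M ^ 2 = Real.log M * Real.log (Real.log M) := Real.sq_sqrt hprodnn
  have hlogL1 : (1:ℝ) ≤ Real.log (resL M) := by
    rw [Real.le_log_iff_exp_le hLpos]
    have := Real.exp_one_lt_d9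
    linarith
  have hlogLnn : (0:ℝ) ≤ Real.log (resL M) := by linarith
  have hLlelog : resL M ≤ Real.log M := by
    have h1 : Real.log (Real.log M) ≤ Real.log M :=
      (Real.log_le_self hlogMpos.le).trans (le_refl _)
    have h2 : Real.log M * Real.log (Real.log M) ≤ Real.log M * Real.log M :=
      mul_le_mul_of_nonneg_left h1 hlogMpos.le
    calc resL M ≤ Real.sqrt (Real.log M * Real.log M) := Real.sqrt_le_sqrt h2
      _ = Real.log M := Real.sqrt_mul_self hlogMpos.le
  have hlogLle : Real.log (resL M) ≤ Real.log (Real.log M) :=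
    Real.log_le_log hLpos hLlelog
  -- abbreviations
  set T := ∑ p ∈ resP M, resc M p * Real.log p with hT
  set D := ∑ p ∈ resP M, resc M p * Real.log p ^ 2 with hD
  have hTnn : 0 ≤ T :=
    Finset.sum_nonneg fun p _ => mul_nonneg (resc_nonneg M p) (Real.log_natCast_nonneg p)
  have hKnn : 0 ≤ Real.log (resK M) := Real.log_natCast_nonneg _
  have hTle := resT_le M
  have hDle := resD_le M
  have hlogK := logK_le M hlogL1
  have hlogL2 : (1:ℝ) ≤ Real.log (resL M) ^ 2 := by nlinarith
  -- T ≤ 3 L (log L)^2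
  have hT2 : T ≤ 3 * resL M * Real.log (resL M) ^ 2 := by
    have : resL M * (1 + Real.log (resK M)) ≤ resL M * (3 * Real.log (resL M) ^ 2) := by
      refine mul_le_mul_of_nonneg_left ?_ hLpos.le
      linarith
    calc T ≤ resL M * (1 + Real.log (resK M)) := hTle
      _ ≤ resL M * (3 * Real.log (resL M) ^ 2) := this
      _ = 3 * resL M * Real.log (resL M) ^ 2 := by ring
  have hD2 : D ≤ 6 * resL M * Real.log (resL M) ^ 4 := by
    calc D ≤ T * Real.log (resK M) := hDle
      _ ≤ (3 * resL M * Real.log (resL M) ^ 2) * (2 * Real.log (resL M) ^ 2) := by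
          refine mul_le_mul hT2 hlogK hKnn ?_
          positivity
      _ = 6 * resL M * Real.log (resL M) ^ 4 := by ring
  have hDT : D + T ^ 2 ≤ 15 * resL M ^ 2 * Real.log (resL M) ^ 4 := by
    have hTsq : T ^ 2 ≤ 9 * resL M ^ 2 * Real.log (resL M) ^ 4 := by
      have h := mul_le_mul hT2 hT2 hTnn
        (by positivity : (0:ℝ) ≤ 3 * resL M * Real.log (resL M) ^ 2)
      calc T ^ 2 = T * T := sq T
        _ ≤ (3 * resL M * Real.log (resL M) ^ 2) * (3 * resL M * Real.log (resL M) ^ 2) := h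
        _ = 9 * resL M ^ 2 * Real.log (resL M) ^ 4 := by ring
    have hLle : 6 * resL M ≤ 6 * resL M ^ 2 := by nlinarith
    have h6 : 6 * resL M * Real.log (resL M) ^ 4 ≤ 6 * resL M ^ 2 * Real.log (resL M) ^ 4 := by
      calc 6 * resL M * Real.log (resL M) ^ 4 = (6 * resL M) * Real.log (resL M) ^ 4 := by ring
        _ ≤ (6 * resL M ^ 2) * Real.log (resL M) ^ 4 :=
            mul_le_mul_of_nonneg_right hLle (pow_nonneg hlogLnn 4)
        _ = 6 * resL M ^ 2 * Real.log (resL M) ^ 4 := by ring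
    linarith
  -- convert to log M quantities
  have hlog4 : Real.log (resL M) ^ 4 ≤ Real.log (Real.log M) ^ 4 :=
    pow_le_pow_left₀ hlogLnn hlogLle 4
  have hloglognn : (0:ℝ) ≤ Real.log (Real.log M) := by linarith
  have hDT2 : D + T ^ 2 ≤ 15 * Real.log M * Real.log (Real.log M) ^ 5 := by
    calc D + T ^ 2 ≤ 15 * resL M ^ 2 * Real.log (resL M) ^ 4 := hDT
      _ ≤ 15 * resL M ^ 2 * Real.log (Real.log M) ^ 4 :=
          mul_le_mul_of_nonneg_left hlog4 (by positivity)
      _ = 15 * Real.log M * Real.log (Real.log M) ^ 5 := by rw [hL2]; ring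
  -- the rpow comparison
  have hrpow_nn : (0:ℝ) ≤ Real.log M ^ (ε/5) := Real.rpow_nonneg hlogMpos.le _
  have hE4' : Real.log (Real.log M) ≤ 1/3 * Real.log M ^ (ε/5) := by
    have h1 : Real.log (Real.log M) ≤ ‖Real.log (Real.log M)‖ := le_abs_self _
    have h2 : ‖(Real.log M) ^ (ε/5)‖ = Real.log M ^ (ε/5) := abs_of_nonneg hrpow_nn
    rw [h2] at hE4
    linarith
  have hpow5 : Real.log (Real.log M) ^ 5 ≤ (1/3 * Real.log M ^ (ε/5)) ^ 5 :=
    pow_le_pow_left₀ hloglognn hE4' 5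
  have hrpow5 : (Real.log M ^ (ε/5)) ^ (5:ℕ) = Real.log M ^ ε := by
    rw [← Real.rpow_natCast (Real.log M ^ (ε/5)) 5, ← Real.rpow_mul hlogMpos.le]
    norm_num
  have hDT3 : D + T ^ 2 ≤ Real.log M ^ ((1:ℝ) + ε) := by
    have h1 : (1/3 * Real.log M ^ (ε/5)) ^ 5 = (1/243) * Real.log M ^ ε := by
      rw [mul_pow, hrpow5]; norm_num
    have h2 : D + T ^ 2 ≤ 15 * Real.log M * ((1/243) * Real.log M ^ ε) := by
      rw [← h1]
      refine hDT2.trans ?_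
      exact mul_le_mul_of_nonneg_left hpow5 (by positivity)
    have h3 : Real.log M ^ ((1:ℝ) + ε) = Real.log M * Real.log M ^ ε := by
      rw [Real.rpow_add hlogMpos, Real.rpow_one]
    rw [h3]
    have h4 : (0:ℝ) ≤ Real.log M ^ ε := Real.rpow_nonneg hlogMpos.le _
    nlinarith [mul_nonneg hlogMpos.le h4]
  -- assemble
  have hmain := main_bound M
  rw [← resQ1_eq] at hmain
  have hQ1 := one_le_resQ1 M
  have hSnn : 0 ≤ ∑ n ∈ Finset.Icc 1 M, ∑ u ∈ Finset.Icc 1 (M / n),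
      resF M u * resF M (n * u) * Real.log n ^ 2 / Real.sqrt n := by
    refine Finset.sum_nonneg fun n _ => Finset.sum_nonneg fun u _ => ?_
    exact div_nonneg (mul_nonneg (mul_nonneg (resF_nonneg M u) (resF_nonneg M (n*u)))
      (sq_nonneg _)) (Real.sqrt_nonneg _)
  have hfinal : ∑ n ∈ Finset.Icc 1 M, ∑ u ∈ Finset.Icc 1 (M / n),
      resF M u * resF M (n * u) * Real.log n ^ 2 / Real.sqrt n
      ≤ resQ1 M * Real.log M ^ ((1:ℝ) + ε) := by
    refine hmain.trans ?_
    exact mul_le_mul_of_nonneg_left hDT3 (by linarith)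
  have hrhs_nn : 0 ≤ resQ1 M * Real.log M ^ ((1:ℝ) + ε) := by
    have h5 : (0:ℝ) ≤ Real.log M ^ ((1:ℝ) + ε) := Real.rpow_nonneg hlogMpos.le _
    exact mul_nonneg (by linarith) h5
  rw [Real.norm_eq_abs, Real.norm_eq_abs, abs_of_nonneg hSnn, abs_of_nonneg hrhs_nn, one_mul]
  exact hfinal
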